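/- Fix β > 0 and ρ_1, ..., ρ_n ∈ ℝ, and let E_{r,n}(θ) := Σ_{s=0}^{r} (-1)^{r+s} e_s(cosh(βθ_1),...,cosh(βθ_n)) · h_{r-s}(cosh(βρ_r),...,cosh(βρ_n)) for θ ∈ ℝⁿ. Then for each fixed θ ∈ ℝⁿ and each r with 1 ≤ r ≤ n, lim_{β→0⁺} β^{-2r} E_{r,n}(θ) = 2^{-r} Σ_{s=0}^{r} (-1)^{r+s} e_s(θ_1²,...,θ_n²) h_{r-s}(ρ_r²,...,ρ_n²). -/

import Mathlib

/-- The elementary symmetric polynomial of degree `s` in the variables `t j`, `j ∈ S`. -/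
def esym (s : ℕ) (S : Finset ℕ) (t : ℕ → ℝ) : ℝ :=
  ∑ J ∈ S.powersetCard s, ∏ j ∈ J, t j

/-- The complete homogeneous symmetric polynomial of degree `k` in the variables `t j`, `j ∈ S`. -/
def hsym (k : ℕ) (S : Finset ℕ) (t : ℕ → ℝ) : ℝ :=
  ∑ m ∈ S.sym k, ((m : Multiset ℕ).map t).prod


open Finset Filter Real

lemma esym_zero (S : Finset ℕ) (t : ℕ → ℝ) : esym 0 S t = 1 := by
  simp [esym]

lemma esym_of_card_lt {s : ℕ} {S : Finset ℕ} (h : S.card < s) (t : ℕ → ℝ) : esym s S t = 0 := by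
  simp [esym, Finset.powersetCard_eq_empty.2 h]

lemma hsym_zero (S : Finset ℕ) (t : ℕ → ℝ) : hsym 0 S t = 1 := by
  simp only [hsym, Finset.sym_zero, Finset.sum_singleton]
  rfl

lemma hsym_empty (k : ℕ) (t : ℕ → ℝ) : hsym (k+1) (∅ : Finset ℕ) t = 0 := by
  simp [hsym, Finset.sym_empty]

lemma esym_insert {a : ℕ} {S : Finset ℕ} (ha : a ∉ S) (s : ℕ) (t : ℕ → ℝ) :
    esym (s+1) (insert a S) t = esym (s+1) S t + t a * esym s S t := by
  classical
  have hdisj : Disjoint (S.powersetCard (s+1)) ((S.powersetCard s).image (insert a)) := by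
    rw [Finset.disjoint_left]
    intro J hJ hJ'
    obtain ⟨K, hK, rfl⟩ := Finset.mem_image.1 hJ'
    exact ha ((Finset.mem_powersetCard.1 hJ).1 (Finset.mem_insert_self a K))
  rw [esym, Finset.powersetCard_succ_insert ha, Finset.sum_union hdisj, Finset.sum_image ?inj]
  case inj =>
    intro J hJ K hK h
    have haJ : a ∉ J := fun h' => ha ((Finset.mem_powersetCard.1 hJ).1 h')
    have haK : a ∉ K := fun h' => ha ((Finset.mem_powersetCard.1 hK).1 h')
    rw [← Finset.erase_insert haJ, ← Finset.erase_insert haK, h]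
  rw [esym, esym, Finset.mul_sum]
  congr 1
  refine Finset.sum_congr rfl fun J hJ => ?_
  rw [Finset.prod_insert (fun h => ha ((Finset.mem_powersetCard.1 hJ).1 h))]

lemma hsym_insert {a : ℕ} {S : Finset ℕ} (ha : a ∉ S) (k : ℕ) (t : ℕ → ℝ) :
    hsym (k+1) (insert a S) t = hsym (k+1) S t + t a * hsym k (insert a S) t := by
  classical
  have hsplit := (Finset.filter_union_filter_not_eq (fun m : Sym ℕ (k+1) => a ∈ m)
    ((insert a S).sym (k+1))).symm
  have hdisj : Disjoint (((insert a S).sym (k+1)).filter (fun m => a ∈ m))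
      (((insert a S).sym (k+1)).filter (fun m => ¬ a ∈ m)) :=
    Finset.disjoint_filter_filter_not _ _ _
  rw [hsym, hsplit, Finset.sum_union hdisj]
  have h2 : (((insert a S).sym (k+1)).filter (fun m => ¬ a ∈ m)) = S.sym (k+1) := by
    ext m
    simp only [Finset.mem_filter, Finset.mem_sym_iff, Finset.mem_insert]
    constructor
    · rintro ⟨h1, h2⟩ b hb
      rcases h1 b hb with h | h
      · exact absurd (h ▸ hb) h2
      · exact h
    · intro h
      refine ⟨fun b hb => Or.inr (h b hb), fun hmem => ha (h a hmem)⟩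
  have h1 : ∑ m ∈ ((insert a S).sym (k+1)).filter (fun m => a ∈ m),
      ((m : Multiset ℕ).map t).prod = t a * hsym k (insert a S) t := by
    rw [hsym, Finset.mul_sum]
    refine (Finset.sum_bij
      (fun (m : Sym ℕ k) (_ : m ∈ (insert a S).sym k) => a ::ₛ m) ?_ ?_ ?_ ?_).symm
    · intro m hm
      rw [Finset.mem_filter]
      refine ⟨Finset.mem_sym_iff.2 fun b hb => ?_, Sym.mem_cons_self a m⟩
      rcases Sym.mem_cons.1 hb with h | h
      · exact h ▸ Finset.mem_insert_self a S
      · exact Finset.mem_sym_iff.1 hm b h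
    · intro m _ m' _ h
      exact (Sym.cons_inj_right a m m').1 h
    · intro m' hm'
      have hmem : a ∈ (m' : Multiset ℕ) := (Finset.mem_filter.1 hm').2
      obtain ⟨u, hu⟩ := Multiset.exists_cons_of_mem hmem
      have hcard : Multiset.card u = k := by
        have h := congrArg Multiset.card hu
        rw [Sym.card_coe, Multiset.card_cons] at h
        omega
      refine ⟨⟨u, hcard⟩, ?_, ?_⟩
      · refine Finset.mem_sym_iff.2 fun b hb => ?_
        have hb' : b ∈ (m' : Multiset ℕ) := by
          rw [hu]; exact Multiset.mem_cons_of_mem hb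
        exact Finset.mem_sym_iff.1 (Finset.mem_filter.1 hm').1 b hb'
      · apply Subtype.ext
        show ((a ::ₛ (⟨u, hcard⟩ : Sym ℕ k)) : Multiset ℕ) = (m' : Multiset ℕ)
        exact hu.symm
    · intro m hm
      rw [Sym.coe_cons, Multiset.map_cons, Multiset.prod_cons]
  rw [h1, h2, add_comm]
  simp only [hsym]

lemma esym_image (s : ℕ) (S : Finset ℕ) (c : ℕ) (t : ℕ → ℝ) :
    esym s (S.image (· + c)) t = esym s S (fun j => t (j + c)) := by
  classical
  unfold esym
  refine (Finset.sum_bij (fun (J : Finset ℕ) (_ : J ∈ S.powersetCard s) => J.image (· + c))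
    ?_ ?_ ?_ ?_).symm
  · intro J hJ
    rw [Finset.mem_powersetCard] at hJ ⊢
    exact ⟨Finset.image_subset_image hJ.1,
      by rw [Finset.card_image_of_injective _ (add_left_injective c), hJ.2]⟩
  · intro J _ K _ h
    exact Finset.image_injective (add_left_injective c) h
  · intro J' hJ'
    rw [Finset.mem_powersetCard] at hJ'
    obtain ⟨J, hJS, rfl⟩ := Finset.subset_image_iff.1 hJ'.1
    refine ⟨J, Finset.mem_powersetCard.2 ⟨hJS, ?_⟩, rfl⟩
    rw [← hJ'.2, Finset.card_image_of_injective _ (add_left_injective c)]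
  · intro J _
    rw [Finset.prod_image (fun x _ y _ h => add_left_injective c h)]

lemma hsym_image (k : ℕ) (S : Finset ℕ) (c : ℕ) (t : ℕ → ℝ) :
    hsym k (S.image (· + c)) t = hsym k S (fun j => t (j + c)) := by
  classical
  unfold hsym
  refine (Finset.sum_bij (fun (m : Sym ℕ k) (_ : m ∈ S.sym k) => m.map (· + c))
    ?_ ?_ ?_ ?_).symm
  · intro m hm
    refine Finset.mem_sym_iff.2 fun b hb => ?_
    obtain ⟨x, hx, rfl⟩ := Sym.mem_map.1 hb
    exact Finset.mem_image_of_mem _ (Finset.mem_sym_iff.1 hm x hx)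
  · intro m _ m' _ h
    exact Sym.map_injective (add_left_injective c) k h
  · intro m' hm'
    refine ⟨m'.map (· - c), ?_, ?_⟩
    · refine Finset.mem_sym_iff.2 fun b hb => ?_
      obtain ⟨x, hx, rfl⟩ := Sym.mem_map.1 hb
      obtain ⟨y, hy, rfl⟩ := Finset.mem_image.1 (Finset.mem_sym_iff.1 hm' x hx)
      simpa using hy
    · show Sym.map (· + c) (Sym.map (· - c) m') = m'
      rw [Sym.map_map]
      have : ∀ x ∈ m', ((· + c) ∘ (· - c)) x = id x := by
        intro x hx
        obtain ⟨y, _, rfl⟩ := Finset.mem_image.1 (Finset.mem_sym_iff.1 hm' x hx)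
        simp
      rw [Sym.map_congr this, Sym.map_id]
  · intro m _
    apply congrArg
    rw [Sym.coe_map, Multiset.map_map]
    rfl

noncomputable def Ssum (n r : ℕ) (x z : ℕ → ℝ) : ℝ :=
  ∑ s ∈ Finset.range (r + 1), (-1 : ℝ) ^ (r + s) *
    esym s (Finset.Icc 1 n) x * hsym (r - s) (Finset.Icc 1 (n + 1 - r)) z

lemma Ssum_of_lt {n r : ℕ} (h : n < r) (x z : ℕ → ℝ) : Ssum n r x z = 0 := by
  unfold Ssum
  have hset : Finset.Icc 1 (n + 1 - r) = ∅ := by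
    rw [Finset.Icc_eq_empty_iff]
    omega
  refine Finset.sum_eq_zero fun s hs => ?_
  rw [Finset.mem_range] at hs
  by_cases hsr : s = r
  · subst hsr
    rw [esym_of_card_lt (by rw [Nat.card_Icc]; omega) x]
    ring
  · obtain ⟨u, hu⟩ : ∃ u, r - s = u + 1 := ⟨r - s - 1, by omega⟩
    rw [hu, hset, hsym_empty]
    ring

lemma Icc_one_succ (N : ℕ) : Finset.Icc 1 (N + 1) = insert (N + 1) (Finset.Icc 1 N) := by
  ext b
  simp only [Finset.mem_Icc, Finset.mem_insert]
  omega

lemma Ssum_rec (N R : ℕ) (hRN : R ≤ N) (x z : ℕ → ℝ) :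
    Ssum (N + 1) (R + 1) x z
      = Ssum N (R + 1) x z + (x (N + 1) - z (N - R + 1)) * Ssum N R x z := by
  have hM : N + 1 + 1 - (R + 1) = (N - R) + 1 := by omega
  have hM2 : N + 1 - (R + 1) = N - R := by omega
  have hM3 : N + 1 - R = N - R + 1 := by omega
  set M := N - R with hMdef
  have hEins : Finset.Icc 1 (N + 1) = insert (N + 1) (Finset.Icc 1 N) := Icc_one_succ N
  have hHins : Finset.Icc 1 (M + 1) = insert (M + 1) (Finset.Icc 1 M) := Icc_one_succ M
  have hNotE : (N + 1) ∉ Finset.Icc 1 N := by simp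
  have hNotH : (M + 1) ∉ Finset.Icc 1 M := by simp
  -- abbreviations
  set E : ℕ → ℝ := fun s => esym s (Finset.Icc 1 N) x with hE
  set H1 : ℕ → ℝ := fun k => hsym k (Finset.Icc 1 (M + 1)) z with hH1
  set H : ℕ → ℝ := fun k => hsym k (Finset.Icc 1 M) z with hH
  -- Step A : split the esym
  have stepA : Ssum (N + 1) (R + 1) x z
      = (∑ s ∈ Finset.range (R + 2), (-1 : ℝ) ^ (R + 1 + s) * E s * H1 (R + 1 - s))
        + x (N + 1) * (∑ s ∈ Finset.range (R + 1), (-1 : ℝ) ^ (R + s) * E s * H1 (R - s)) := by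
    unfold Ssum
    rw [hM]
    have hsplit : ∀ s ∈ Finset.range (R + 2),
        (-1 : ℝ) ^ (R + 1 + s) * esym s (Finset.Icc 1 (N + 1)) x * hsym (R + 1 - s) (Finset.Icc 1 (M + 1)) z
        = (-1 : ℝ) ^ (R + 1 + s) * E s * H1 (R + 1 - s)
          + (-1 : ℝ) ^ (R + 1 + s) * (if s = 0 then 0 else x (N + 1) * E (s - 1)) * H1 (R + 1 - s) := by
      intro s _
      rcases s with _ | u
      · simp [hE, hH1, esym_zero]
      · rw [hEins, esym_insert hNotE u x]
        simp only [if_neg (Nat.succ_ne_zero u), Nat.add_sub_cancel]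
        ring
    rw [Finset.sum_congr rfl hsplit, Finset.sum_add_distrib]
    congr 1
    rw [Finset.sum_range_succ']
    simp only [eq_self_iff_true, if_true, mul_zero, zero_mul, add_zero]
    rw [Finset.mul_sum]
    refine Finset.sum_congr rfl fun u _ => ?_
    have hpow : (-1 : ℝ) ^ (R + 1 + (u + 1)) = (-1 : ℝ) ^ (R + u) := by
      rw [show R + 1 + (u + 1) = (R + u) + 2 by ring, pow_add]
      norm_num
    have hsub : R + 1 - (u + 1) = R - u := by omega
    rw [hpow, hsub, if_neg (Nat.succ_ne_zero u), Nat.add_sub_cancel]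
    ring
  -- Step B : split the hsym
  have stepB : (∑ s ∈ Finset.range (R + 2), (-1 : ℝ) ^ (R + 1 + s) * E s * H1 (R + 1 - s))
      = Ssum N (R + 1) x z
        - z (M + 1) * (∑ s ∈ Finset.range (R + 1), (-1 : ℝ) ^ (R + s) * E s * H1 (R - s)) := by
    have hsplit : ∀ s ∈ Finset.range (R + 2),
        (-1 : ℝ) ^ (R + 1 + s) * E s * H1 (R + 1 - s)
        = (-1 : ℝ) ^ (R + 1 + s) * E s * H (R + 1 - s)
          + (-1 : ℝ) ^ (R + 1 + s) * E s * (z (M + 1) * (if s = R + 1 then 0 else H1 (R - s))) := by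
      intro s hs
      rw [Finset.mem_range] at hs
      by_cases hsR : s = R + 1
      · subst hsR
        simp only [Nat.sub_self, if_pos rfl, mul_zero, add_zero]
        simp [hH1, hH, hsym_zero]
      · have hk : R + 1 - s = (R - s) + 1 := by omega
        rw [hk, hH1, hH]
        simp only [if_neg hsR]
        rw [hHins, hsym_insert hNotH (R - s) z]
        ring
    rw [Finset.sum_congr rfl hsplit, Finset.sum_add_distrib]
    have h1 : (∑ s ∈ Finset.range (R + 2), (-1 : ℝ) ^ (R + 1 + s) * E s * H (R + 1 - s))
        = Ssum N (R + 1) x z := by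
      unfold Ssum
      rw [hM2]
    have h2 : (∑ s ∈ Finset.range (R + 2),
          (-1 : ℝ) ^ (R + 1 + s) * E s * (z (M + 1) * (if s = R + 1 then 0 else H1 (R - s))))
        = - (z (M + 1) * (∑ s ∈ Finset.range (R + 1), (-1 : ℝ) ^ (R + s) * E s * H1 (R - s))) := by
      rw [Finset.sum_range_succ]
      simp only [eq_self_iff_true, if_true, mul_zero, add_zero]
      rw [Finset.mul_sum, ← Finset.sum_neg_distrib]
      refine Finset.sum_congr rfl fun s hs => ?_
      rw [Finset.mem_range] at hs
      have hpow : (-1 : ℝ) ^ (R + 1 + s) = - (-1 : ℝ) ^ (R + s) := by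
        rw [show R + 1 + s = (R + s) + 1 by ring, pow_succ]
        ring
      rw [if_neg (by omega : ¬ s = R + 1), hpow]
      ring
    rw [h1, h2]
    ring
  -- conclude
  rw [stepA, stepB]
  have hz : N - R + 1 = M + 1 := rfl
  have hSN : (∑ s ∈ Finset.range (R + 1), (-1 : ℝ) ^ (R + s) * E s * H1 (R - s))
      = Ssum N R x z := by
    unfold Ssum
    rw [hM3]
  rw [hSN, hz]
  ring

lemma tendsto_sinh_div : Tendsto (fun x : ℝ => Real.sinh x / x) (nhdsWithin 0 {(0:ℝ)}ᶜ) (nhds 1) := by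
  have h := Real.hasDerivAt_sinh 0
  rw [hasDerivAt_iff_tendsto_slope] at h
  rw [Real.cosh_zero] at h
  refine h.congr fun x => ?_
  rw [slope_def_field, Real.sinh_zero, sub_zero, sub_zero]

lemma tendsto_cosh_sub_one (a : ℝ) :
    Tendsto (fun β : ℝ => (Real.cosh (β * a) - 1) / β ^ 2) (nhdsWithin 0 (Set.Ioi 0))
      (nhds (a ^ 2 / 2)) := by
  by_cases ha : a = 0
  · subst ha
    simp only [mul_zero, Real.cosh_zero, sub_self, zero_div]
    simpa using tendsto_const_nhds
  · have hmap : Tendsto (fun β : ℝ => β * a / 2) (nhdsWithin 0 (Set.Ioi 0))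
        (nhdsWithin 0 {(0:ℝ)}ᶜ) := by
      rw [tendsto_nhdsWithin_iff]
      constructor
      · have : Tendsto (fun β : ℝ => β * a / 2) (nhds 0) (nhds (0 * a / 2)) :=
          ((continuous_mul_right a).div_const 2).tendsto 0
        simpa using this.mono_left nhdsWithin_le_nhds
      · filter_upwards [self_mem_nhdsWithin] with β hβ
        exact div_ne_zero (mul_ne_zero (ne_of_gt hβ) ha) two_ne_zero
    have h2 : Tendsto (fun β : ℝ => (Real.sinh (β * a / 2) / (β * a / 2)) ^ 2)
        (nhdsWithin 0 (Set.Ioi 0)) (nhds 1) := by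
      simpa using ((tendsto_sinh_div.comp hmap).pow 2)
    have h3 := h2.const_mul (a ^ 2 / 2)
    rw [mul_one] at h3
    refine Tendsto.congr' ?_ h3
    filter_upwards [self_mem_nhdsWithin] with β hβ
    have hβ0 : (β : ℝ) ≠ 0 := ne_of_gt hβ
    have hkey : Real.cosh (β * a) - 1 = 2 * Real.sinh (β * a / 2) ^ 2 := by
      have h := Real.cosh_two_mul (β * a / 2)
      rw [show 2 * (β * a / 2) = β * a by ring] at h
      rw [h, Real.cosh_sq]
      ring
    rw [hkey]
    field_simp

lemma tendsto_cosh_diff (a b : ℝ) :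
    Tendsto (fun β : ℝ => (Real.cosh (β * a) - Real.cosh (β * b)) / β ^ 2)
      (nhdsWithin 0 (Set.Ioi 0)) (nhds ((a ^ 2 - b ^ 2) / 2)) := by
  have h := (tendsto_cosh_sub_one a).sub (tendsto_cosh_sub_one b)
  rw [show (a ^ 2 - b ^ 2) / 2 = a ^ 2 / 2 - b ^ 2 / 2 by ring]
  refine h.congr fun β => ?_
  rw [div_sub_div_same]
  congr 1
  ring

lemma key_limit (θ z : ℕ → ℝ) : ∀ (n r : ℕ),
    Tendsto (fun β : ℝ =>
        Ssum n r (fun j => Real.cosh (β * θ j)) (fun i => Real.cosh (β * z i)) / β ^ (2 * r))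
      (nhdsWithin 0 (Set.Ioi 0))
      (nhds ((1 / 2 ^ r) * Ssum n r (fun j => θ j ^ 2) (fun i => z i ^ 2))) := by
  intro n
  induction n with
  | zero =>
    intro r
    rcases r with _ | R
    · have hone : ∀ x z' : ℕ → ℝ, Ssum 0 0 x z' = 1 := by
        intro x z'
        unfold Ssum
        simp [esym_zero, hsym_zero]
      simp only [hone, mul_zero, pow_zero, div_one, mul_one]
      exact tendsto_const_nhds
    · have hzero : ∀ x z' : ℕ → ℝ, Ssum 0 (R + 1) x z' = 0 := fun x z' =>
        Ssum_of_lt (Nat.succ_pos R) x z'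
      simp only [hzero, zero_div, mul_zero]
      exact tendsto_const_nhds
  | succ N ih =>
    intro r
    rcases r with _ | R
    · have hone : ∀ x z' : ℕ → ℝ, Ssum (N + 1) 0 x z' = 1 := by
        intro x z'
        unfold Ssum
        simp [esym_zero, hsym_zero]
      simp only [hone, mul_zero, pow_zero, div_one, mul_one]
      exact tendsto_const_nhds
    · by_cases hRN : R ≤ N
      · have h1 := ih (R + 1)
        have h2 := ih R
        have h3 := tendsto_cosh_diff (θ (N + 1)) (z (N - R + 1))
        have hcomb := h1.add (h3.mul h2)
        have hlim : (1 / 2 ^ (R + 1)) * Ssum (N + 1) (R + 1) (fun j => θ j ^ 2) (fun i => z i ^ 2)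
            = (1 / 2 ^ (R + 1)) * Ssum N (R + 1) (fun j => θ j ^ 2) (fun i => z i ^ 2)
              + ((θ (N + 1) ^ 2 - z (N - R + 1) ^ 2) / 2)
                * ((1 / 2 ^ R) * Ssum N R (fun j => θ j ^ 2) (fun i => z i ^ 2)) := by
          rw [Ssum_rec N R hRN]
          ring
        rw [hlim]
        refine Tendsto.congr' ?_ hcomb
        filter_upwards [self_mem_nhdsWithin] with β hβ
        have hβ0 : (β : ℝ) ≠ 0 := ne_of_gt hβ
        rw [Ssum_rec N R hRN (fun j => Real.cosh (β * θ j)) (fun i => Real.cosh (β * z i))]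
        rw [show 2 * (R + 1) = 2 * R + 2 by ring, pow_add]
        field_simp
      · have hlt : N + 1 < R + 1 := by omega
        simp only [Ssum_of_lt hlt, zero_div, mul_zero]
        exact tendsto_const_nhds

/-- For `E_{r,n}(θ) = Σ_{s=0}^r (-1)^{r+s} e_s(cosh βθ₁,…,cosh βθₙ) h_{r-s}(cosh βρ_r,…,cosh βρₙ)`
one has `lim_{β→0⁺} β^{-2r} E_{r,n}(θ)
  = 2^{-r} Σ_{s=0}^r (-1)^{r+s} e_s(θ₁²,…,θₙ²) h_{r-s}(ρ_r²,…,ρₙ²)`. -/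
theorem Ern_small_beta_limit (n r : ℕ) (h1 : 1 ≤ r) (h2 : r ≤ n) (θ ρ : ℕ → ℝ) :
    Filter.Tendsto (fun β : ℝ =>
        (∑ s ∈ Finset.range (r + 1), (-1 : ℝ) ^ (r + s) *
            esym s (Finset.Icc 1 n) (fun j => Real.cosh (β * θ j)) *
            hsym (r - s) (Finset.Icc r n) (fun i => Real.cosh (β * ρ i))) / β ^ (2 * r))
      (nhdsWithin 0 (Set.Ioi 0))
      (nhds ((1 / 2 ^ r) * ∑ s ∈ Finset.range (r + 1), (-1 : ℝ) ^ (r + s) *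
          esym s (Finset.Icc 1 n) (fun j => (θ j) ^ 2) *
          hsym (r - s) (Finset.Icc r n) (fun i => (ρ i) ^ 2))) := by
  classical
  have hicc : Finset.Icc r n = (Finset.Icc 1 (n + 1 - r)).image (· + (r - 1)) := by
    rw [Finset.image_add_right_Icc]
    congr 1 <;> omega
  have hh : ∀ (t : ℕ → ℝ) (k : ℕ),
      hsym k (Finset.Icc r n) t = hsym k (Finset.Icc 1 (n + 1 - r)) (fun i => t (i + (r - 1))) := by
    intro t k
    rw [hicc, hsym_image]
  have h := key_limit θ (fun i => ρ (i + (r - 1))) n r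
  unfold Ssum at h
  simp only [hh]
  exact h
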